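/- In every ortholattice, the mapped orthomodularity identity (a ∪ (a' ∩ (a∪b))) ≡ (a ∪ b) = 1 holds, where a ≡ b := (a∩b)∪(a'∩b'), even though a ∪ (a' ∩ (a∪b)) = a ∪ b may fail. -/
import Mathlib


/-- An ortholattice as an algebra ⟨α, ', ∪, ∩⟩ with join `j` and
orthocomplement `c` primitive, and meet defined by De Morgan. -/
structure OrthoLattice (α : Type*) where
  j : α → α → α
  c : α → α
  j_comm : ∀ a b, j a b = j b a
  j_assoc : ∀ a b d, j (j a b) d = j a (j b d)
  c_invol : ∀ a, c (c a) = a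
  j_top : ∀ a b, j a (j b (c b)) = j b (c b)
  absorb : ∀ a b, j a (c (j (c a) (c b))) = a

namespace OrthoLattice

variable {α : Type*}

/-- meet: a ∩ b = (a' ∪ b')' -/
def m (L : OrthoLattice α) (a b : α) : α := L.c (L.j (L.c a) (L.c b))

/-- the unit 1 = a ∪ a' -/
def one (L : OrthoLattice α) (a : α) : α := L.j a (L.c a)

/-- quantum equivalence a ≡ b = (a∩b) ∪ (a'∩b') -/
def equiv (L : OrthoLattice α) (a b : α) : α := L.j (L.m a b) (L.m (L.c a) (L.c b))

/-- classical equivalence a ≡₀ b = (a'∪b) ∩ (a∪b') -/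
def equiv0 (L : OrthoLattice α) (a b : α) : α := L.m (L.j (L.c a) b) (L.j a (L.c b))

/-- Sasaki hook a →₁ b = a' ∪ (a ∩ b) -/
def sasaki (L : OrthoLattice α) (a b : α) : α := L.j (L.c a) (L.m a b)

end OrthoLattice

namespace OrthoLattice

variable {α : Type*} (L : OrthoLattice α)

lemma aux_absorb' (u v : α) : L.j (L.c u) (L.c (L.j u v)) = L.c u := by
  have h := L.absorb (L.c u) (L.c v)
  rwa [L.c_invol, L.c_invol] at h

lemma aux_meet_absorb (a b : α) : L.m a (L.j a b) = a := by
  unfold m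
  rw [aux_absorb', L.c_invol]

lemma aux_idem (a : α) : L.j a a = a := by
  have h := L.absorb a (L.j a a)
  rwa [show L.c (L.j (L.c a) (L.c (L.j a a))) = L.m a (L.j a a) from rfl,
    aux_meet_absorb] at h

end OrthoLattice

/-- in every ortholattice the mapped orthomodularity identity
(a ∪ (a' ∩ (a∪b))) ≡ (a ∪ b) = 1 holds. -/
theorem stmt16 {α : Type*} (L : OrthoLattice α) :
    ∀ a b : α,
      L.equiv (L.j a (L.m (L.c a) (L.j a b))) (L.j a b) = L.one a := by
  intro a b
  set y := L.j a b with hy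
  set z := L.j a (L.c y) with hz
  set x := L.j a (L.c z) with hx
  -- the term in the statement is x
  have hterm : L.j a (L.m (L.c a) y) = x := by
    unfold OrthoLattice.m
    rw [L.c_invol]
  -- x ∪ y = y
  have hycz : L.j y (L.c z) = y := by
    have h := L.absorb y (L.c a)
    rw [L.c_invol, L.j_comm (L.c y) a] at h
    exact h
  have hxy : L.j x y = y := by
    rw [hx, L.j_assoc, L.j_comm (L.c z) y, hycz, hy, ← L.j_assoc, L.aux_idem]
  -- m x y = x
  have hmxy : L.m x y = x := by
    unfold OrthoLattice.m
    have : L.c y = L.c (L.j x y) := by rw [hxy]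
    rw [this, L.aux_absorb', L.c_invol]
  -- m x' y' = y'
  have hm2 : L.m (L.c x) (L.c y) = L.c y := by
    unfold OrthoLattice.m
    rw [L.c_invol, L.c_invol, hxy]
  -- equiv x y = z ∪ z'
  have hequiv : L.equiv x y = L.j z (L.c z) := by
    unfold OrthoLattice.equiv
    rw [hmxy, hm2, hx, L.j_assoc, L.j_comm (L.c z) (L.c y), ← L.j_assoc, ← hz]
  -- all ones agree
  have h1 : L.j z (L.c z) = L.j a (L.c a) := by
    have h2 := L.j_top (L.j a (L.c a)) z
    have h3 := L.j_top (L.j z (L.c z)) a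
    calc L.j z (L.c z) = L.j (L.j a (L.c a)) (L.j z (L.c z)) := h2.symm
      _ = L.j (L.j z (L.c z)) (L.j a (L.c a)) := L.j_comm _ _
      _ = L.j a (L.c a) := h3
  rw [hterm, hequiv, h1]
  rfl
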